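/- For every integer n ≥ 1 and integers 0 < a < f, the partial q-zeta function satisfies H_q^{(h)}(1−n, a | f) = −(f^{n−1}/n) q^{ha} B_{n,q^f}^{(h)}(a/f), where H_q^{(h)}(s,a|f) = Σ_{m≡a (f), m>0} q^{mh}/m^s − (h log q/(s−1)) Σ_{m≡a (f), m>0} q^{hm}/m^{s−1} (the series converging absolutely at s = 1−n since |q|<1). -/

import Mathlib

open Filter Topology

private lemma qzeta_coeff_unique {F : ℝ → ℝ} {A B : ℕ → ℝ} {ρ : ℝ} (hρ : 0 < ρ)
    (hA : ∀ t : ℝ, |t| < ρ → HasSum (fun j : ℕ => A j * t ^ j) (F t))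
    (hB : ∀ t : ℝ, |t| < ρ → HasSum (fun j : ℕ => B j * t ^ j) (F t)) : A = B := by
  have key : ∀ C : ℕ → ℝ, (∀ t : ℝ, |t| < ρ → HasSum (fun j : ℕ => C j * t ^ j) (F t)) →
      HasFPowerSeriesAt F (FormalMultilinearSeries.ofScalars ℝ C) 0 := by
    intro C hC
    rw [hasFPowerSeriesAt_iff]
    have hcoeff : ∀ j, (FormalMultilinearSeries.ofScalars ℝ C).coeff j = C j := by
      intro j
      simp [FormalMultilinearSeries.coeff, FormalMultilinearSeries.ofScalars, smul_eq_mul, List.ofFn_const, Pi.one_def]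
    filter_upwards [Metric.ball_mem_nhds (0 : ℝ) hρ] with t ht
    rw [Metric.mem_ball, Real.dist_eq, sub_zero] at ht
    have := hC t ht
    simp only [hcoeff, smul_eq_mul, zero_add]
    exact this.congr_fun fun j => by ring
  have := (key A hA).eq_formalMultilinearSeries (key B hB)
  exact (FormalMultilinearSeries.ofScalars_series_eq_iff ℝ A B).mp this


private lemma qzeta_exp_hasSum (x : ℝ) :
    HasSum (fun j : ℕ => x ^ j / j.factorial) (Real.exp x) := by
  rw [Real.exp_eq_exp_ℝ]
  exact NormedSpace.expSeries_div_hasSum_exp x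

private lemma qzeta_expansion {u : ℝ} (hu0 : 0 < u) (hu1 : u < 1) {y : ℝ} (hy0 : 0 ≤ y)
    (hy1 : y ≤ 1) {T : ℕ → ℝ} (hT : ∀ j, HasSum (fun k : ℕ => u ^ k * (y + k) ^ j) (T j))
    {t : ℝ} (ht : u * Real.exp |t| < 1) :
    HasSum (fun j : ℕ => (T j / j.factorial) * t ^ j)
      (Real.exp (y * t) / (1 - u * Real.exp t)) := by
  have hut : u * Real.exp t < 1 :=
    lt_of_le_of_lt (by
      have := Real.exp_le_exp.mpr (le_abs_self t)
      nlinarith [Real.exp_pos t]) ht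
  have hut0 : 0 ≤ u * Real.exp t := le_of_lt (mul_pos hu0 (Real.exp_pos t))
  set g : ℕ × ℕ → ℝ := fun p => u ^ p.1 * ((y + p.1) * t) ^ p.2 / p.2.factorial with hg
  -- fiberwise over k
  have hfiber : ∀ k : ℕ, HasSum (fun j => g (k, j)) (u ^ k * Real.exp ((y + k) * t)) := by
    intro k
    have := (qzeta_exp_hasSum ((y + k) * t)).mul_left (u ^ k)
    exact this.congr_fun fun j => by simp only [hg]; ring
  -- summability of g
  have habs : Summable fun p : ℕ × ℕ => |g p| := by
    have habs_eq : (fun p : ℕ × ℕ => |g p|)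
        = fun p : ℕ × ℕ => u ^ p.1 * ((y + p.1) * |t|) ^ p.2 / p.2.factorial := by
      funext p
      have h1 : (0:ℝ) ≤ y + p.1 := by positivity
      rw [hg, abs_div, abs_mul, abs_pow, abs_pow, abs_mul, abs_of_nonneg hu0.le,
        abs_of_nonneg h1, Nat.abs_cast]
    rw [habs_eq, summable_prod_of_nonneg (fun p => by positivity)]
    constructor
    · intro k
      have := (qzeta_exp_hasSum ((y + k) * |t|)).mul_left (u ^ k)
      exact (this.congr_fun fun j => by ring).summable
    · apply Summable.congr (f := fun k : ℕ =>
        Real.exp (y * |t|) * (u * Real.exp |t|) ^ k)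
        ((hasSum_geometric_of_lt_one
          (le_of_lt (mul_pos hu0 (Real.exp_pos |t|))) ht).mul_left
            (Real.exp (y * |t|))).summable
      intro k
      have hfib : HasSum (fun j => u ^ k * ((y + k) * |t|) ^ j / j.factorial)
          (u ^ k * Real.exp ((y + k) * |t|)) :=
        ((qzeta_exp_hasSum ((y + k) * |t|)).mul_left (u ^ k)).congr_fun fun j => by ring
      rw [hfib.tsum_eq, add_mul, Real.exp_add, mul_pow, ← Real.exp_nat_mul,
        mul_comm (k : ℝ) |t|]
      ring
  have hgsum : Summable g := summable_abs_iff.mp habs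
  have hGeo : HasSum (fun k : ℕ => u ^ k * Real.exp ((y + k) * t))
      (Real.exp (y * t) / (1 - u * Real.exp t)) := by
    have := (hasSum_geometric_of_lt_one hut0 hut).mul_left (Real.exp (y * t))
    rw [div_eq_mul_inv]
    exact this.congr_fun fun k => by
      rw [add_mul, Real.exp_add, mul_pow, ← Real.exp_nat_mul, mul_comm (k : ℝ) t]; ring
  have hgS : HasSum g (Real.exp (y * t) / (1 - u * Real.exp t)) := by
    have h2 := hgsum.hasSum.prod_fiberwise hfiber
    exact (h2.unique hGeo) ▸ hgsum.hasSum
  have hswap : HasSum (fun p : ℕ × ℕ => g (p.2, p.1))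
      (Real.exp (y * t) / (1 - u * Real.exp t)) := by
    have := ((Equiv.prodComm ℕ ℕ).hasSum_iff (f := g)).mpr hgS
    exact this.congr_fun fun p => rfl
  have hfib2 : ∀ j : ℕ, HasSum (fun k => g (k, j)) (T j * (t ^ j / j.factorial)) := by
    intro j
    exact ((hT j).mul_right (t ^ j / j.factorial)).congr_fun fun k => by
      simp only [hg, mul_pow]; ring
  exact (hswap.prod_fiberwise hfib2).congr_fun fun j => by ring

/-- for `n ≥ 1` and `0 < a < f`, the partial `q`-zeta function satisfies
`H_q^{(h)}(1−n,a|f) = −(f^{n−1}/n) q^{ha} B_{n,q^f}^{(h)}(a/f)`. At `s = 1−n` the two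
defining series converge (they are `S₁ = Σ_{m≡a(f),m>0} q^{hm} m^{n−1}` and
`S₂ = Σ_{m≡a(f),m>0} q^{hm} m^{n}`, the `m` being enumerated as `m = a + k·f`), so
`H_q^{(h)}(1−n,a|f) = S₁ + (h log q/n)·S₂`. `P k y = B_{k,q^f}^{(h)}(y)` is defined by
the generating function `(h log(q^f) + t)/((q^f)^h e^t − 1) e^{yt} = Σ P k y t^k/k!`. -/
theorem partial_qZeta_at_nonpositive_integers
    (h : ℤ) (hh : h ≠ 0) (q : ℝ) (hq0 : 0 < q) (hq1 : q < 1)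
    (a f : ℕ) (ha : 0 < a) (haf : a < f)
    (n : ℕ) (hn : 1 ≤ n)
    (P : ℕ → ℝ → ℝ) (r : ℝ) (hr : 0 < r)
    (hP : ∀ (y : ℝ) (t : ℝ), |t| < r →
      HasSum (fun k : ℕ => P k y * t ^ k / (k.factorial : ℝ))
        ((((h : ℝ) * Real.log (q ^ (f : ℕ)) + t) /
            ((q ^ (f : ℕ)) ^ h * Real.exp t - 1)) * Real.exp (y * t)))
    (S₁ S₂ : ℝ)
    (hS₁ : HasSum (fun k : ℕ =>
      q ^ ((h : ℤ) * (a + k * f)) * ((a + k * f : ℕ) : ℝ) ^ (n - 1)) S₁)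
    (hS₂ : HasSum (fun k : ℕ =>
      q ^ ((h : ℤ) * (a + k * f)) * ((a + k * f : ℕ) : ℝ) ^ n) S₂) :
    S₁ + ((h : ℝ) * Real.log q / n) * S₂
      = -((f : ℝ) ^ ((n : ℤ) - 1) / n) * q ^ ((h : ℤ) * a) * P n ((a : ℝ) / f) := by
  -- h must be positive
  have hhpos : 0 < h := by
    by_contra hneg
    push_neg at hneg
    have hlt : h < 0 := lt_of_le_of_ne hneg hh
    have htend := hS₁.summable.tendsto_atTop_zero
    have hbound : ∀ k : ℕ,
        q ^ ((h : ℤ) * a) ≤ q ^ ((h : ℤ) * (a + k * f)) * ((a + k * f : ℕ) : ℝ) ^ (n - 1) := by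
      intro k
      have h1 : (1:ℝ) ≤ ((a + k * f : ℕ) : ℝ) ^ (n - 1) := by
        apply one_le_pow₀
        exact_mod_cast Nat.one_le_iff_ne_zero.mpr (by omega)
      have h2 : q ^ ((h : ℤ) * a) ≤ q ^ ((h : ℤ) * (↑a + ↑k * ↑f)) := by
        apply zpow_le_zpow_right_of_le_one₀ hq0 hq1.le
        have : (0:ℤ) ≤ (k : ℤ) * f := by positivity
        nlinarith
      calc q ^ ((h : ℤ) * a) ≤ q ^ ((h : ℤ) * (↑a + ↑k * ↑f)) * 1 := by rwa [mul_one]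
        _ ≤ _ := by
          apply mul_le_mul_of_nonneg_left h1 (le_of_lt (zpow_pos hq0 _))
    have hle := ge_of_tendsto htend (Eventually.of_forall hbound)
    exact absurd hle (not_le.mpr (zpow_pos hq0 _))
  set N := h.toNat with hNdef
  have hNh : (N : ℤ) = h := Int.toNat_of_nonneg hhpos.le
  have hN1 : 1 ≤ N := by omega
  set Q := q ^ f with hQdef
  have hQ0 : 0 < Q := pow_pos hq0 f
  have hQ1 : Q < 1 := pow_lt_one₀ hq0.le hq1 (by omega)
  set u := Q ^ N with hudef
  have hu0 : 0 < u := pow_pos hQ0 N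
  have hu1 : u < 1 := pow_lt_one₀ hQ0.le hQ1 (by omega)
  set y := (a : ℝ) / f with hydef
  have hf0 : (0:ℝ) < f := by exact_mod_cast (by omega : 0 < f)
  have hy0 : 0 ≤ y := by positivity
  have hy1 : y ≤ 1 := by
    rw [hydef, div_le_one hf0]
    exact_mod_cast haf.le
  have hL : (h : ℝ) * Real.log Q = Real.log u := by
    simp only [hudef, hQdef, Real.log_pow, ← hNh, Int.cast_natCast]
  have hzpowQ : Q ^ (h : ℤ) = u := by rw [← hNh, zpow_natCast]
  -- summability of the T series
  have hTsumm : ∀ j : ℕ, Summable (fun k : ℕ => u ^ k * (y + k) ^ j) := by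
    intro j
    have base : Summable (fun k : ℕ => (k : ℝ) ^ j * u ^ k) :=
      summable_pow_mul_geometric_of_norm_lt_one j
        (by rw [Real.norm_eq_abs, abs_of_pos hu0]; exact hu1)
    have h1 : Summable (fun k : ℕ => ((k : ℝ) + 1) ^ j * u ^ k) := by
      have h2 := ((summable_nat_add_iff 1).mpr base).mul_left u⁻¹
      refine h2.congr fun k => ?_
      push_cast
      rw [pow_succ]
      field_simp
    refine h1.of_nonneg_of_le (fun k => by positivity) fun k => ?_
    rw [mul_comm]
    apply mul_le_mul_of_nonneg_right _ (by positivity)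
    apply pow_le_pow_left₀ (by positivity)
    linarith
  set T : ℕ → ℝ := fun j => ∑' k : ℕ, u ^ k * (y + k) ^ j with hTdef
  have hT : ∀ j, HasSum (fun k : ℕ => u ^ k * (y + k) ^ j) (T j) := fun j => (hTsumm j).hasSum
  -- the common radius
  set ρ := min r (Real.log u⁻¹) with hρdef
  have hρ : 0 < ρ := lt_min hr (Real.log_pos ((one_lt_inv₀ hu0).mpr hu1))
  have hsmall : ∀ t : ℝ, |t| < ρ → u * Real.exp |t| < 1 := by
    intro t ht
    have h1 : |t| < Real.log u⁻¹ := lt_of_lt_of_le ht (min_le_right _ _)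
    have h2 := Real.exp_lt_exp.mpr h1
    rw [Real.exp_log (by positivity)] at h2
    calc u * Real.exp |t| < u * u⁻¹ := by
          exact mul_lt_mul_of_pos_left h2 hu0
      _ = 1 := mul_inv_cancel₀ hu0.ne'
  have hsmall' : ∀ t : ℝ, |t| < ρ → u * Real.exp t < 1 := by
    intro t ht
    refine lt_of_le_of_lt ?_ (hsmall t ht)
    have := Real.exp_le_exp.mpr (le_abs_self t)
    nlinarith [Real.exp_pos t]
  -- power series on the A side
  have hA : ∀ t : ℝ, |t| < ρ → HasSum (fun j : ℕ => (P j y / j.factorial) * t ^ j)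
      (((Real.log u + t) / (u * Real.exp t - 1)) * Real.exp (y * t)) := by
    intro t ht
    have := hP y t (lt_of_lt_of_le ht (min_le_left _ _))
    rw [hL, hzpowQ] at this
    exact this.congr_fun fun j => by ring
  -- power series on the B side
  have hW : ∀ t : ℝ, |t| < ρ → HasSum (fun j : ℕ => (T j / j.factorial) * t ^ j)
      (Real.exp (y * t) / (1 - u * Real.exp t)) := fun t ht =>
    qzeta_expansion hu0 hu1 hy0 hy1 hT (hsmall t ht)
  set B : ℕ → ℝ := fun j =>
    -Real.log u * (T j / j.factorial) - (j : ℝ) * T (j - 1) / j.factorial with hBdef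
  have hB : ∀ t : ℝ, |t| < ρ → HasSum (fun j : ℕ => B j * t ^ j)
      (((Real.log u + t) / (u * Real.exp t - 1)) * Real.exp (y * t)) := by
    intro t ht
    have hW' := hW t ht
    have hne : 1 - u * Real.exp t ≠ 0 := by
      have := hsmall' t ht
      intro hcontra
      rw [sub_eq_zero] at hcontra
      rw [← hcontra] at this
      exact lt_irrefl _ this
    have hE1 : HasSum (fun j : ℕ => ((j : ℝ) + 1) * T j / (j + 1).factorial * t ^ (j + 1))
        (Real.exp (y * t) / (1 - u * Real.exp t) * t) := by
      refine (hW'.mul_right t).congr_fun fun j => ?_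
      rw [Nat.factorial_succ]
      have hfj : ((j.factorial : ℝ)) ≠ 0 := by positivity
      push_cast
      rw [pow_succ]
      field_simp
    have hE : HasSum (fun j : ℕ => (j : ℝ) * T (j - 1) / j.factorial * t ^ j)
        (Real.exp (y * t) / (1 - u * Real.exp t) * t) := by
      have h2 := (hasSum_nat_add_iff
        (f := fun j : ℕ => (j : ℝ) * T (j - 1) / j.factorial * t ^ j) 1).mp
        (hE1.congr_fun fun j => by push_cast [Nat.add_sub_cancel]; ring)
      simpa using h2
    have hcomb := (hW'.mul_left (-Real.log u)).sub hE
    have hne2 : u * Real.exp t - 1 ≠ 0 := by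
      intro hcontra
      apply hne
      linarith [sub_eq_zero.mp hcontra]
    have hval : -Real.log u * (Real.exp (y * t) / (1 - u * Real.exp t))
        - Real.exp (y * t) / (1 - u * Real.exp t) * t
        = ((Real.log u + t) / (u * Real.exp t - 1)) * Real.exp (y * t) := by
      field_simp
      ring
    rw [hval] at hcomb
    exact hcomb.congr_fun fun j => by rw [hBdef]; ring
  -- identify the coefficients
  have hAB : (fun j : ℕ => P j y / j.factorial) = B := qzeta_coeff_unique hρ hA hB
  have hfacn : ((n.factorial : ℝ)) ≠ 0 := by positivity
  have hPn : P n y = -Real.log u * T n - (n : ℝ) * T (n - 1) := by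
    have hcf := congrFun hAB n
    rw [hBdef] at hcf
    have h2 := congrArg (fun x : ℝ => x * (n.factorial : ℝ)) hcf
    simp only at h2
    rw [div_mul_cancel₀ _ hfacn] at h2
    rw [h2]
    field_simp
  -- identify S₁ and S₂
  have hterm : ∀ (j : ℕ) (k : ℕ),
      q ^ ((h : ℤ) * (↑a + ↑k * ↑f)) * ((a + k * f : ℕ) : ℝ) ^ j
        = q ^ (N * a) * (f : ℝ) ^ j * (u ^ k * (y + k) ^ j) := by
    intro j k
    have hcast : ((a + k * f : ℕ) : ℝ) = (f : ℝ) * (y + k) := by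
      rw [hydef]
      push_cast
      field_simp
    have hzpow : q ^ ((h : ℤ) * (↑a + ↑k * ↑f)) = q ^ (N * a) * u ^ k := by
      rw [← hNh]
      rw [show ((N : ℤ)) * (↑a + ↑k * ↑f) = ((N * a + f * N * k : ℕ) : ℤ) by push_cast; ring]
      rw [zpow_natCast, pow_add, hudef, hQdef, ← pow_mul, ← pow_mul, mul_assoc]
    rw [hzpow, hcast, mul_pow]
    ring
  have hS1' : HasSum (fun k : ℕ =>
      q ^ ((h : ℤ) * (↑a + ↑k * ↑f)) * ((a + k * f : ℕ) : ℝ) ^ (n - 1))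
      (q ^ (N * a) * (f : ℝ) ^ (n - 1) * T (n - 1)) :=
    ((hT (n - 1)).mul_left (q ^ (N * a) * (f : ℝ) ^ (n - 1))).congr_fun fun k =>
      (hterm (n - 1) k)
  have hS2' : HasSum (fun k : ℕ =>
      q ^ ((h : ℤ) * (↑a + ↑k * ↑f)) * ((a + k * f : ℕ) : ℝ) ^ n)
      (q ^ (N * a) * (f : ℝ) ^ n * T n) :=
    ((hT n).mul_left (q ^ (N * a) * (f : ℝ) ^ n)).congr_fun fun k => (hterm n k)
  have hS1eq : S₁ = q ^ (N * a) * (f : ℝ) ^ (n - 1) * T (n - 1) := hS₁.unique hS1'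
  have hS2eq : S₂ = q ^ (N * a) * (f : ℝ) ^ n * T n := hS₂.unique hS2'
  -- final computation
  have hfn : (f : ℝ) ^ ((n : ℤ) - 1) = (f : ℝ) ^ (n - 1 : ℕ) := by
    rw [show (n : ℤ) - 1 = ((n - 1 : ℕ) : ℤ) by omega, zpow_natCast]
  have hqa : q ^ ((h : ℤ) * a) = q ^ (N * a : ℕ) := by
    rw [← hNh, show ((N : ℤ)) * (a : ℤ) = ((N * a : ℕ) : ℤ) by push_cast; ring, zpow_natCast]
  have hlogu : Real.log u = (N : ℝ) * ((f : ℝ) * Real.log q) := by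
    simp only [hudef, hQdef, Real.log_pow]
  have hhN : (h : ℝ) = (N : ℝ) := by exact_mod_cast hNh.symm
  have hfn' : (f : ℝ) ^ n = (f : ℝ) ^ (n - 1 : ℕ) * f := by
    rw [← pow_succ]
    congr 1
    omega
  have hn0 : (n : ℝ) ≠ 0 := by positivity
  rw [hS1eq, hS2eq, hqa, hfn, hPn, hlogu, hhN, hfn']
  field_simp
  ring
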